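/- Let J be a finite set, and let a, d, c : J → ℝ satisfy a j ≤ d j and c j ≥ 0 for all j ∈ J. Then the following are equivalent: (1) there exists a family (S_j)_{j∈J} of pairwise disjoint measurable subsets of ℝ with S_j ⊆ [a j, d j] and Lebesgue measure of S_j at least c j for every j ∈ J; (2) for all real numbers ℓ ≤ r, the sum of c j over all j ∈ J with ℓ ≤ a j and d j ≤ r is at most r − ℓ. -/

import Mathlib

open MeasureTheory Set

/-- Image of a measurable set under the "expansion" map `g`:
it is measurable, has the same volume, and avoids `Ioc a0 (a0 + c0)`. -/
lemma gimg_props (a0 c0 : ℝ) (hc0 : 0 ≤ c0) (X : Set ℝ) (hX : MeasurableSet X) :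
    MeasurableSet ((fun t => if t ≤ a0 then t else t + c0) '' X) ∧
    volume ((fun t => if t ≤ a0 then t else t + c0) '' X) = volume X ∧
    (fun t => if t ≤ a0 then t else t + c0) '' X ⊆ Set.Iic a0 ∪ Set.Ioi (a0 + c0) := by
  set g : ℝ → ℝ := fun t => if t ≤ a0 then t else t + c0 with hg
  have himg : g '' X = (X ∩ Set.Iic a0) ∪ ((fun t => t + c0) '' (X ∩ Set.Ioi a0)) := by
    ext t
    constructor
    · rintro ⟨x, hxX, rfl⟩
      by_cases h : x ≤ a0
      · exact Or.inl ⟨by simpa [hg, h] using hxX, by simp [hg, h]⟩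
      · refine Or.inr ⟨x, ⟨hxX, not_le.mp h⟩, by simp [hg, h]⟩
    · rintro (⟨hxX, hxle⟩ | ⟨x, ⟨hxX, hxgt⟩, rfl⟩)
      · have h : t ≤ a0 := hxle
        exact ⟨t, hxX, by simp [hg, if_pos h]⟩
      · exact ⟨x, hxX, by simp [hg, not_le.mpr (show a0 < x from hxgt)]⟩
  have htrans : (fun t : ℝ => t + c0) '' (X ∩ Set.Ioi a0)
      = (fun t : ℝ => -c0 + t) ⁻¹' (X ∩ Set.Ioi a0) := by
    ext t
    simp only [Set.mem_image, Set.mem_preimage]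
    constructor
    · rintro ⟨x, hx, rfl⟩
      have : -c0 + (x + c0) = x := by ring
      rw [this]; exact hx
    · intro h; exact ⟨-c0 + t, h, by ring⟩
  have hmeas2 : MeasurableSet ((fun t : ℝ => t + c0) '' (X ∩ Set.Ioi a0)) := by
    rw [htrans]
    exact (hX.inter measurableSet_Ioi).preimage (measurable_const_add _)
  refine ⟨?_, ?_, ?_⟩
  · rw [himg]
    exact (hX.inter measurableSet_Iic).union hmeas2
  · rw [himg]
    have hdisj : Disjoint (X ∩ Set.Iic a0) ((fun t : ℝ => t + c0) '' (X ∩ Set.Ioi a0)) := by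
      refine Set.disjoint_left.mpr ?_
      rintro t ⟨-, ht⟩ ⟨x, ⟨-, hx⟩, rfl⟩
      simp only [Set.mem_Iic] at ht
      simp only [Set.mem_Ioi] at hx
      linarith
    rw [measure_union hdisj hmeas2, htrans, measure_preimage_add]
    have h1 : X ∩ Set.Ioi a0 = X \ Set.Iic a0 := by
      ext t; simp [Set.mem_diff, not_le]
    rw [h1]
    exact measure_inter_add_diff X measurableSet_Iic
  · rw [himg]
    rintro t (⟨-, ht⟩ | ⟨x, ⟨-, hx⟩, rfl⟩)
    · exact Or.inl ht
    · simp only [Set.mem_Ioi] at hx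
      exact Or.inr (by simp only [Set.mem_Ioi]; linarith)

/-- Points in compressed windows map back into original windows. -/
lemma g_mem_Icc {a0 c0 aj dj t : ℝ} (hc0 : 0 ≤ c0) (hne : t ≠ a0)
    (ht1 : (if aj ≤ a0 then aj else max a0 (aj - c0)) ≤ t)
    (ht2 : t ≤ (if dj ≤ a0 then dj else max a0 (dj - c0))) :
    aj ≤ (if t ≤ a0 then t else t + c0) ∧ (if t ≤ a0 then t else t + c0) ≤ dj := by
  by_cases h : t ≤ a0
  · have hlt : t < a0 := lt_of_le_of_ne h hne
    simp only [if_pos h]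
    have haj : aj ≤ a0 := by
      by_contra hcon
      rw [if_neg hcon] at ht1
      have := le_max_left a0 (aj - c0)
      linarith
    rw [if_pos haj] at ht1
    refine ⟨ht1, ?_⟩
    by_cases h2 : dj ≤ a0
    · rw [if_pos h2] at ht2; exact ht2
    · push_neg at h2; linarith
  · push_neg at h
    simp only [if_neg (not_le.mpr h)]
    constructor
    · by_cases h2 : aj ≤ a0
      · linarith
      · rw [if_neg h2] at ht1
        rcases max_le_iff.mp ht1 with ⟨-, h3⟩
        linarith
    · by_cases h2 : dj ≤ a0
      · rw [if_pos h2] at ht2; linarith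
      · rw [if_neg h2] at ht2
        rcases le_max_iff.mp ht2 with h3 | h3
        · linarith
        · linarith

open Finset in
/-- Main auxiliary induction: sufficiency of the demand condition. -/
lemma sched_aux {J : Type*} [DecidableEq J] (c : J → ℝ) :
    ∀ (n : ℕ) (s : Finset J), s.card ≤ n → ∀ (a d : J → ℝ),
      (∀ j ∈ s, a j ≤ d j) → (∀ j ∈ s, 0 ≤ c j) →
      (∀ ℓ r : ℝ, ℓ ≤ r → ∑ j ∈ s.filter (fun j => ℓ ≤ a j ∧ d j ≤ r), c j ≤ r - ℓ) →
      ∃ S : J → Set ℝ,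
        (∀ i ∈ s, ∀ j ∈ s, i ≠ j → Disjoint (S i) (S j)) ∧
        ∀ j ∈ s, MeasurableSet (S j) ∧ S j ⊆ Set.Icc (a j) (d j) ∧
          c j ≤ (volume (S j)).toReal := by
  intro n
  induction n with
  | zero =>
    intro s hs a d _ _ _
    rw [Nat.le_zero, Finset.card_eq_zero] at hs
    subst hs
    exact ⟨fun _ => ∅, by simp, by simp⟩
  | succ n ih =>
    intro s hs a d had hc H
    rcases s.eq_empty_or_nonempty with rfl | hne
    · exact ⟨fun _ => ∅, by simp, by simp⟩
    obtain ⟨j0, hj0s, hj0min⟩ := s.exists_min_image d hne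
    have hc0 : 0 ≤ c j0 := hc j0 hj0s
    have hkey : a j0 + c j0 ≤ d j0 := by
      have h1 := H (a j0) (d j0) (had j0 hj0s)
      have h2 : c j0 ≤ ∑ j ∈ s.filter (fun j => a j0 ≤ a j ∧ d j ≤ d j0), c j :=
        Finset.single_le_sum (f := c)
          (fun j hj => hc j (Finset.mem_filter.mp hj).1)
          (Finset.mem_filter.mpr ⟨hj0s, le_refl (a j0), le_refl (d j0)⟩)
      linarith
    set a0 := a j0 with ha0def
    set c0 := c j0 with hc0def
    set a' : J → ℝ := fun j => if a j ≤ a0 then a j else max a0 (a j - c0) with ha'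
    set d' : J → ℝ := fun j => if d j ≤ a0 then d j else max a0 (d j - c0) with hd'
    have ha'le : ∀ j, a' j ≤ a j := by
      intro j
      by_cases h : a j ≤ a0
      · simp [ha', h]
      · push_neg at h
        simp only [ha', if_neg (not_le.mpr h)]
        exact max_le h.le (by linarith)
    have hd'le : ∀ j, d' j ≤ d j := by
      intro j
      by_cases h : d j ≤ a0
      · simp [hd', h]
      · push_neg at h
        simp only [hd', if_neg (not_le.mpr h)]
        exact max_le h.le (by linarith)
    have had' : ∀ j ∈ s.erase j0, a' j ≤ d' j := by
      intro j hj
      have haddj := had j (Finset.mem_of_mem_erase hj)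
      by_cases h1 : a j ≤ a0
      · by_cases h2 : d j ≤ a0
        · simpa [ha', hd', h1, h2] using haddj
        · simp only [ha', hd', if_pos h1, if_neg h2]
          exact le_max_of_le_left h1
      · have h2 : ¬ d j ≤ a0 := by push_neg at h1 ⊢; linarith
        simp only [ha', hd', if_neg h1, if_neg h2]
        exact max_le_max le_rfl (by linarith)
    have H' : ∀ ℓ r : ℝ, ℓ ≤ r →
        ∑ j ∈ (s.erase j0).filter (fun j => ℓ ≤ a' j ∧ d' j ≤ r), c j ≤ r - ℓ := by
      intro ℓ r hlr
      -- a fact used repeatedly: in the compressed instance, d' j ≤ r with a0 ≤ r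
      -- implies d j ≤ r + c0
      have hdj_bound : ∀ j, a0 ≤ r → d' j ≤ r → d j ≤ r + c0 := by
        intro j hr hdr
        by_cases h : d j ≤ a0
        · linarith
        · rw [hd'] at hdr
          simp only [if_neg h] at hdr
          have := (max_le_iff.mp hdr).2
          linarith
      by_cases hr : r < a0
      · -- everything in the filter has its original window inside [ℓ, r]
        have hsub : (s.erase j0).filter (fun j => ℓ ≤ a' j ∧ d' j ≤ r)
            ⊆ s.filter (fun j => ℓ ≤ a j ∧ d j ≤ r) := by
          intro j hj
          obtain ⟨hjm, hla, hdr⟩ := Finset.mem_filter.mp hj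
          have hdja : d j ≤ a0 := by
            by_contra h
            have : a0 ≤ d' j := by
              simp only [hd', if_neg h]; exact le_max_left _ _
            linarith
          refine Finset.mem_filter.mpr ⟨Finset.mem_of_mem_erase hjm, ?_, ?_⟩
          · exact hla.trans (ha'le j)
          · have : d' j = d j := by simp [hd', hdja]
            linarith
        calc ∑ j ∈ (s.erase j0).filter (fun j => ℓ ≤ a' j ∧ d' j ≤ r), c j
            ≤ ∑ j ∈ s.filter (fun j => ℓ ≤ a j ∧ d j ≤ r), c j :=
              Finset.sum_le_sum_of_subset_of_nonneg hsub
                (fun j hjs _ => hc j (Finset.mem_filter.mp hjs).1)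
          _ ≤ r - ℓ := H ℓ r hlr
      · push_neg at hr
        by_cases hl : a0 < ℓ
        · -- shift the whole interval right by c0
          have hsub : (s.erase j0).filter (fun j => ℓ ≤ a' j ∧ d' j ≤ r)
              ⊆ s.filter (fun j => ℓ + c0 ≤ a j ∧ d j ≤ r + c0) := by
            intro j hj
            obtain ⟨hjm, hla, hdr⟩ := Finset.mem_filter.mp hj
            refine Finset.mem_filter.mpr ⟨Finset.mem_of_mem_erase hjm, ?_,
              hdj_bound j hr hdr⟩
            by_cases h : a j ≤ a0
            · have : a' j = a j := by simp [ha', h]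
              linarith
            · rw [ha'] at hla
              simp only [if_neg h] at hla
              rcases le_max_iff.mp hla with h3 | h3
              · linarith
              · linarith
          calc ∑ j ∈ (s.erase j0).filter (fun j => ℓ ≤ a' j ∧ d' j ≤ r), c j
              ≤ ∑ j ∈ s.filter (fun j => ℓ + c0 ≤ a j ∧ d j ≤ r + c0), c j :=
                Finset.sum_le_sum_of_subset_of_nonneg hsub
                  (fun j hjs _ => hc j (Finset.mem_filter.mp hjs).1)
            _ ≤ (r + c0) - (ℓ + c0) := H (ℓ + c0) (r + c0) (by linarith)
            _ = r - ℓ := by ring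
        · push_neg at hl
          rcases Finset.eq_empty_or_nonempty
            ((s.erase j0).filter (fun j => ℓ ≤ a' j ∧ d' j ≤ r)) with hempty | ⟨j1, hj1⟩
          · rw [hempty, Finset.sum_empty]; linarith
          · -- the filter is nonempty, so d j0 ≤ r + c0 since d j0 is minimal
            obtain ⟨hj1m, -, hj1d⟩ := Finset.mem_filter.mp hj1
            have hd0r : d j0 ≤ r + c0 :=
              (hj0min j1 (Finset.mem_of_mem_erase hj1m)).trans
                (hdj_bound j1 hr hj1d)
            have hj0not : j0 ∉ (s.erase j0).filter (fun j => ℓ ≤ a' j ∧ d' j ≤ r) := by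
              intro h
              exact (Finset.mem_erase.mp (Finset.mem_filter.mp h).1).1 rfl
            have hsub : insert j0 ((s.erase j0).filter (fun j => ℓ ≤ a' j ∧ d' j ≤ r))
                ⊆ s.filter (fun j => ℓ ≤ a j ∧ d j ≤ r + c0) := by
              intro j hj
              rcases Finset.mem_insert.mp hj with rfl | hj
              · exact Finset.mem_filter.mpr ⟨hj0s, hl, hd0r⟩
              · obtain ⟨hjm, hla, hdr⟩ := Finset.mem_filter.mp hj
                exact Finset.mem_filter.mpr ⟨Finset.mem_of_mem_erase hjm,
                  hla.trans (ha'le j), hdj_bound j hr hdr⟩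
            have hsum := Finset.sum_le_sum_of_subset_of_nonneg hsub
              (fun j hjs _ => hc j (Finset.mem_filter.mp hjs).1)
            rw [Finset.sum_insert hj0not] at hsum
            have hH := H ℓ (r + c0) (by linarith)
            linarith
    have hcard : (s.erase j0).card ≤ n := by
      have h1 := Finset.card_erase_of_mem hj0s
      have h2 := Finset.card_pos.mpr hne
      omega
    obtain ⟨S', hdisj', hS'⟩ := ih (s.erase j0) hcard a' d' had'
      (fun j hj => hc j (Finset.mem_of_mem_erase hj)) H'
    set g : ℝ → ℝ := fun t => if t ≤ a0 then t else t + c0 with hg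
    have hginj : Function.Injective g := by
      intro x y hxy
      simp only [hg] at hxy
      by_cases hx : x ≤ a0 <;> by_cases hy : y ≤ a0 <;>
        simp only [hx, hy, if_true, if_false, if_pos, if_neg, not_false_iff] at hxy <;>
        first
          | exact hxy
          | linarith
    have hmeasS' : ∀ j ∈ s.erase j0, MeasurableSet (S' j \ {a0}) := fun j hj =>
      (hS' j hj).1.diff (measurableSet_singleton a0)
    refine ⟨fun j => if j = j0 then Set.Ioc a0 (a0 + c0) else g '' (S' j \ {a0}), ?_, ?_⟩
    · intro i hi j hj hij
      beta_reduce
      by_cases hi0 : i = j0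
      · have hj0' : ¬ j = j0 := fun h => hij (hi0.trans h.symm)
        rw [if_pos hi0, if_neg hj0']
        have hsub := (gimg_props a0 c0 hc0 (S' j \ {a0})
          (hmeasS' j (Finset.mem_erase.mpr ⟨hj0', hj⟩))).2.2
        refine Set.disjoint_left.mpr ?_
        intro t ht ht2
        rcases hsub ht2 with h | h
        · exact absurd ht.1 (not_lt.mpr h)
        · exact absurd ht.2 (not_le.mpr h)
      · by_cases hj0' : j = j0
        · rw [if_neg hi0, if_pos hj0']
          have hsub := (gimg_props a0 c0 hc0 (S' i \ {a0})
            (hmeasS' i (Finset.mem_erase.mpr ⟨hi0, hi⟩))).2.2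
          refine Set.disjoint_right.mpr ?_
          intro t ht ht2
          rcases hsub ht2 with h | h
          · exact absurd ht.1 (not_lt.mpr h)
          · exact absurd ht.2 (not_le.mpr h)
        · rw [if_neg hi0, if_neg hj0']
          exact Set.disjoint_image_of_injective hginj
            (Disjoint.mono Set.diff_subset Set.diff_subset
              (hdisj' i (Finset.mem_erase.mpr ⟨hi0, hi⟩)
                j (Finset.mem_erase.mpr ⟨hj0', hj⟩) hij))
    · intro j hj
      beta_reduce
      by_cases hj0' : j = j0
      · rw [if_pos hj0', hj0']
        refine ⟨measurableSet_Ioc, ?_, ?_⟩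
        · exact Set.Ioc_subset_Icc_self.trans (Set.Icc_subset_Icc le_rfl hkey)
        · rw [Real.volume_Ioc]
          have : a0 + c0 - a0 = c0 := by ring
          rw [this, ENNReal.toReal_ofReal hc0]
      · have hjE : j ∈ s.erase j0 := Finset.mem_erase.mpr ⟨hj0', hj⟩
        obtain ⟨hmeasj, hsubj, hvolj⟩ := hS' j hjE
        obtain ⟨hgm, hgv, -⟩ := gimg_props a0 c0 hc0 (S' j \ {a0}) (hmeasS' j hjE)
        rw [if_neg hj0']
        refine ⟨hgm, ?_, ?_⟩
        · rintro t ⟨x, ⟨hxS, hxne⟩, rfl⟩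
          have hx := hsubj hxS
          have hxne' : x ≠ a0 := by simpa using hxne
          have h1 : (if a j ≤ a0 then a j else max a0 (a j - c0)) ≤ x := by
            have := hx.1; rw [ha'] at this; exact this
          have h2 : x ≤ (if d j ≤ a0 then d j else max a0 (d j - c0)) := by
            have := hx.2; rw [hd'] at this; exact this
          exact g_mem_Icc hc0 hxne' h1 h2
        · rw [hgv]
          have : volume (S' j \ {a0}) = volume (S' j) := by
            apply measure_diff_null
            exact Real.volume_singleton
          rw [this]
          exact hvolj

open MeasureTheory in
theorem stmt_14 (J : Type*) [Fintype J] (a d c : J → ℝ)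
    (had : ∀ j, a j ≤ d j) (hc : ∀ j, 0 ≤ c j) :
    (∃ S : J → Set ℝ,
        (Pairwise fun i j => Disjoint (S i) (S j)) ∧
        ∀ j, MeasurableSet (S j) ∧ S j ⊆ Set.Icc (a j) (d j) ∧
          c j ≤ (volume (S j)).toReal) ↔
    (∀ ℓ r : ℝ, ℓ ≤ r →
        ∑ j ∈ Finset.univ.filter (fun j => ℓ ≤ a j ∧ d j ≤ r), c j ≤ r - ℓ) := by
  classical
  constructor
  · rintro ⟨S, hdisj, hS⟩ ℓ r hlr
    set T := Finset.univ.filter (fun j => ℓ ≤ a j ∧ d j ≤ r) with hT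
    have hsubT : ∀ j ∈ T, S j ⊆ Set.Icc ℓ r := by
      intro j hj
      obtain ⟨-, h1, h2⟩ := Finset.mem_filter.mp hj
      exact (hS j).2.1.trans (Set.Icc_subset_Icc h1 h2)
    have hfin : ∀ j, volume (S j) ≠ ⊤ := by
      intro j
      have := measure_mono (μ := volume) (hS j).2.1
      rw [Real.volume_Icc] at this
      exact (this.trans_lt ENNReal.ofReal_lt_top).ne
    have hunion : volume (⋃ j ∈ T, S j) = ∑ j ∈ T, volume (S j) :=
      measure_biUnion_finset (fun i _ j _ hij => hdisj hij) (fun j _ => (hS j).1)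
    have hle : volume (⋃ j ∈ T, S j) ≤ ENNReal.ofReal (r - ℓ) := by
      rw [← Real.volume_Icc]
      exact measure_mono (Set.iUnion₂_subset hsubT)
    calc ∑ j ∈ T, c j ≤ ∑ j ∈ T, (volume (S j)).toReal :=
          Finset.sum_le_sum (fun j _ => (hS j).2.2)
      _ = (∑ j ∈ T, volume (S j)).toReal :=
          (ENNReal.toReal_sum (fun j _ => hfin j)).symm
      _ = (volume (⋃ j ∈ T, S j)).toReal := by rw [hunion]
      _ ≤ (ENNReal.ofReal (r - ℓ)).toReal :=
          ENNReal.toReal_mono ENNReal.ofReal_ne_top hle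
      _ = r - ℓ := ENNReal.toReal_ofReal (by linarith)
  · intro H
    obtain ⟨S, hdisj, hS⟩ := sched_aux c (Finset.univ.card) Finset.univ le_rfl a d
      (fun j _ => had j) (fun j _ => hc j) H
    exact ⟨S, fun i j hij => hdisj i (Finset.mem_univ i) j (Finset.mem_univ j) hij,
      fun j => hS j (Finset.mem_univ j)⟩
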